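/- The set of E′-valid formulas properly extends intuitionistic propositional logic: every intuitionistically valid formula is E′-valid, every instance ¬¬p → p of the stability scheme for an atom p is E′-valid, and ¬¬p → p is not intuitionistically valid. -/

import Mathlib

/- Formalization of Lorenzen dialogue games, following Felscher's presentation.

   Propositional formulas are built from atoms using ¬, ∧, ∨, →.  A dialogue
   for a formula φ is a sequence of moves beginning with Proponent (P)
   asserting φ at position 0, with O moving at odd positions and P at even
   positions.  Each later move attacks or defends an earlier move of the other
   player, according to the particle rules.  Structural rules (D10, D11, D12,
   D13, E, and the variants D10*, D10′) constrain dialogues further.  P wins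
   if P made the last move and no moves are available to O; φ is S-valid if P
   has an S-winning strategy for φ. -/

namespace LorenzenDialogues

/-- Propositional formulas: atoms, ¬, ∧, ∨, →. -/
inductive Formula : Type
  | atom : ℕ → Formula
  | neg  : Formula → Formula
  | and  : Formula → Formula → Formula
  | or   : Formula → Formula → Formula
  | imp  : Formula → Formula → Formula
deriving DecidableEq

/-- Statements: formulas together with the symbolic attacks `?`, `∧_L`, `∧_R`. -/
inductive Statement : Type
  | form  : Formula → Statement
  | qmark : Statement
  | andL  : Statement
  | andR  : Statement
deriving DecidableEq

/-- Particle rules, attack part: which statements attack which formulas. -/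
inductive Attacks : Statement → Formula → Prop
  | andL (a b : Formula) : Attacks .andL (.and a b)
  | andR (a b : Formula) : Attacks .andR (.and a b)
  | qmark (a b : Formula) : Attacks .qmark (.or a b)
  | imp (a b : Formula) : Attacks (.form a) (.imp a b)
  | neg (a : Formula) : Attacks (.form a) (.neg a)

/-- Particle rules, defense part: `Defends χ a s` means `s` is a permitted
    defense of the formula `χ` against the attack `a`.  (A negation admits
    no defense.) -/
inductive Defends : Formula → Statement → Statement → Prop
  | andL (a b : Formula) : Defends (.and a b) .andL (.form a)
  | andR (a b : Formula) : Defends (.and a b) .andR (.form b)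
  | orL (a b : Formula) : Defends (.or a b) .qmark (.form a)
  | orR (a b : Formula) : Defends (.or a b) .qmark (.form b)
  | imp (a b : Formula) : Defends (.imp a b) (.form a) (.form b)

/-- A move: a statement, a flag recording whether it is an attack (`true`)
    or a defense (`false`), and the position of the earlier move it attacks,
    resp. the earlier attack it defends against. -/
structure Move : Type where
  statement : Statement
  isAttack : Bool
  ref : ℕ
deriving DecidableEq

/-- A dialogue: the initial formula asserted by P at position 0, followed by
    the list of later moves (the move at list index `i` occupies position
    `i + 1`; O moves at odd positions, P at even positions). -/
structure Dialogue : Type where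
  initial : Formula
  moves : List Move

/-- The statement asserted at position `n` (if any). -/
def Dialogue.stmtAt (d : Dialogue) (n : ℕ) : Option Statement :=
  if n = 0 then some (.form d.initial) else (d.moves[n - 1]?).map Move.statement

/-- The move at position `n ≥ 1` (if any); position 0 is the initial assertion,
    not a move. -/
def Dialogue.moveAt (d : Dialogue) (n : ℕ) : Option Move :=
  if n = 0 then none else d.moves[n - 1]?

/-- The move `m`, played at position `n ≥ 1`, is permitted by the particle
    rules: it refers to an earlier position of the other player; if it is an
    attack, it attacks a formula asserted there, and if it is a defense, it
    responds to an attack played there, as the particle rules prescribe. -/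
def MoveOK (d : Dialogue) (n : ℕ) (m : Move) : Prop :=
  m.ref < n ∧ m.ref % 2 ≠ n % 2 ∧
    (m.isAttack = true →
      ∃ ψ, d.stmtAt m.ref = some (.form ψ) ∧ Attacks m.statement ψ) ∧
    (m.isAttack = false →
      ∃ a χ, d.moveAt m.ref = some a ∧ a.isAttack = true ∧
        d.stmtAt a.ref = some (.form χ) ∧ Defends χ a.statement m.statement)

/-- The dialogue adheres to the particle rules (every move is legal). -/
def ParticleOK (d : Dialogue) : Prop :=
  ∀ i m, d.moves[i]? = some m → MoveOK d (i + 1) m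

/-- Position `n` carries a defense of the attack made at position `r`. -/
def IsDefenseOf (d : Dialogue) (n r : ℕ) : Prop :=
  ∃ m, d.moveAt n = some m ∧ m.isAttack = false ∧ m.ref = r

/-- Position `n` carries an attack on the assertion made at position `r`. -/
def IsAttackOn (d : Dialogue) (n r : ℕ) : Prop :=
  ∃ m, d.moveAt n = some m ∧ m.isAttack = true ∧ m.ref = r

/-- Position `n` carries an attack. -/
def IsAttackPos (d : Dialogue) (n : ℕ) : Prop :=
  ∃ m, d.moveAt n = some m ∧ m.isAttack = true

/-- The attack at position `r` is still open (no defense against it has yet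
    been played) before position `k`. -/
def OpenAt (d : Dialogue) (r k : ℕ) : Prop :=
  IsAttackPos d r ∧ ¬ ∃ j, j < k ∧ IsDefenseOf d j r

/-- (D10) P may assert an atomic formula only after it has been asserted by O
    before. -/
def D10 (d : Dialogue) : Prop :=
  ∀ n p, n % 2 = 0 → d.stmtAt n = some (.form (.atom p)) →
    ∃ j, j < n ∧ j % 2 = 1 ∧ d.stmtAt j = some (.form (.atom p))

/-- (D10*) P may assert an atom `p` only if O has asserted `p` or `¬p`
    before. -/
def D10star (d : Dialogue) : Prop :=
  ∀ n p, n % 2 = 0 → d.stmtAt n = some (.form (.atom p)) →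
    ∃ j, j < n ∧ j % 2 = 1 ∧
      (d.stmtAt j = some (.form (.atom p)) ∨
        d.stmtAt j = some (.form (.neg (.atom p))))

/-- (D10′) P may assert an atom `p` only if O has asserted `p` or `¬¬p`
    before. -/
def D10prime (d : Dialogue) : Prop :=
  ∀ n p, n % 2 = 0 → d.stmtAt n = some (.form (.atom p)) →
    ∃ j, j < n ∧ j % 2 = 1 ∧
      (d.stmtAt j = some (.form (.atom p)) ∨
        d.stmtAt j = some (.form (.neg (.neg (.atom p)))))

/-- (D11) When defending, only the most recent open attack may be responded
    to: the attack defended against is open, and no strictly more recent open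
    attack (against the same player) exists. -/
def D11 (d : Dialogue) : Prop :=
  ∀ n r, IsDefenseOf d n r →
    OpenAt d r n ∧ ¬ ∃ r', r < r' ∧ r' < n ∧ r' % 2 = r % 2 ∧ OpenAt d r' n

/-- (D12) An attack may be answered at most once. -/
def D12 (d : Dialogue) : Prop :=
  ∀ n₁ n₂ r, IsDefenseOf d n₁ r → IsDefenseOf d n₂ r → n₁ = n₂

/-- (D13) A P-assertion (made at an even position) may be attacked at most
    once. -/
def D13 (d : Dialogue) : Prop :=
  ∀ n₁ n₂ r, r % 2 = 0 → IsAttackOn d n₁ r → IsAttackOn d n₂ r → n₁ = n₂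

/-- (E) O can react only upon the immediately preceding P-statement. -/
def ERule (d : Dialogue) : Prop :=
  ∀ n m, n % 2 = 1 → d.moveAt n = some m → m.ref = n - 1

/-- A ruleset is a set of structural rules, i.e. a predicate on dialogues. -/
def Ruleset := Dialogue → Prop

/-- Ruleset D = {D10, D11, D12, D13}. -/
def rulesetD : Ruleset := fun d => D10 d ∧ D11 d ∧ D12 d ∧ D13 d

/-- Ruleset E = D ∪ {E}. -/
def rulesetE : Ruleset := fun d => rulesetD d ∧ ERule d

/-- Ruleset CL = E − {D11, D12} = {D10, D13, E}. -/
def rulesetCL : Ruleset := fun d => D10 d ∧ D13 d ∧ ERule d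

/-- Ruleset N = D − {D11, D12} = {D10, D13}. -/
def rulesetN : Ruleset := fun d => D10 d ∧ D13 d

/-- Ruleset E* = {D10*, D11, D12, D13, E}. -/
def rulesetEstar : Ruleset :=
  fun d => D10star d ∧ D11 d ∧ D12 d ∧ D13 d ∧ ERule d

/-- Ruleset E′ = {D10′, D11, D12, D13, E}. -/
def rulesetEprime : Ruleset :=
  fun d => D10prime d ∧ D11 d ∧ D12 d ∧ D13 d ∧ ERule d

/-- An S-dialogue: a dialogue adhering to the particle rules and to the
    structural rules S. -/
def Legal (S : Ruleset) (d : Dialogue) : Prop := ParticleOK d ∧ S d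

/-- Extend a dialogue by one move. -/
def Dialogue.extend (d : Dialogue) (m : Move) : Dialogue :=
  ⟨d.initial, d.moves ++ [m]⟩

/-- The position about to be played. -/
def nextPos (d : Dialogue) : ℕ := d.moves.length + 1

/-- It is P's turn (the next position is even). -/
def PTurn (d : Dialogue) : Prop := nextPos d % 2 = 0

/-- The move `m` legally extends the S-dialogue `d`. -/
def LegalExt (S : Ruleset) (d : Dialogue) (m : Move) : Prop :=
  Legal S (d.extend m)

/-- `PWinningC S C d` holds when P, moving under the additional constraint
    `C` on P's own choices, has a winning strategy in the S-dialogue game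
    continuing the dialogue `d`: at P's turn, P has a legal move (satisfying
    `C`) after which P is still winning; at O's turn, every legal O-move
    leads to a position where P is winning (in particular, if no O-move is
    available, P has won: P made the last move and O cannot move). -/
inductive PWinningC (S : Ruleset) (C : Dialogue → Move → Prop) : Dialogue → Prop
  | pMove (d : Dialogue) (m : Move) (hturn : PTurn d)
      (hm : LegalExt S d m) (hC : C d m)
      (h : PWinningC S C (d.extend m)) : PWinningC S C d
  | oMoves (d : Dialogue) (hturn : ¬ PTurn d)
      (h : ∀ m, LegalExt S d m → PWinningC S C (d.extend m)) :
      PWinningC S C d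

/-- P has a winning strategy continuing the S-dialogue `d`. -/
def PWinning (S : Ruleset) (d : Dialogue) : Prop :=
  PWinningC S (fun _ _ => True) d

/-- `valid S φ` (written `⊨_S φ`): the opening assertion of φ is itself a
    legal S-dialogue and P has an S-winning strategy for φ. -/
def valid (S : Ruleset) (φ : Formula) : Prop :=
  Legal S ⟨φ, []⟩ ∧ PWinning S ⟨φ, []⟩

/-- Derivability in intuitionistic propositional logic (a Hilbert-style
    axiomatization with modus ponens). -/
inductive IProv : Formula → Prop
  | k (a b : Formula) : IProv (.imp a (.imp b a))
  | s (a b c : Formula) :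
      IProv (.imp (.imp a (.imp b c)) (.imp (.imp a b) (.imp a c)))
  | andE1 (a b : Formula) : IProv (.imp (.and a b) a)
  | andE2 (a b : Formula) : IProv (.imp (.and a b) b)
  | andI (a b : Formula) : IProv (.imp a (.imp b (.and a b)))
  | orI1 (a b : Formula) : IProv (.imp a (.or a b))
  | orI2 (a b : Formula) : IProv (.imp b (.or a b))
  | orE (a b c : Formula) :
      IProv (.imp (.imp a c) (.imp (.imp b c) (.imp (.or a b) c)))
  | negI (a b : Formula) :
      IProv (.imp (.imp a b) (.imp (.imp a (.neg b)) (.neg a)))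
  | negE (a b : Formula) : IProv (.imp (.neg a) (.imp a b))
  | mp (a b : Formula) : IProv (.imp a b) → IProv a → IProv b

/-- The stability principle ¬¬p → p for the atom `p`. -/
def stab (p : ℕ) : Formula := .imp (.neg (.neg (.atom p))) (.atom p)

/-- Stable logic: intuitionistic propositional logic plus all instances of
    the stability scheme ¬¬p → p for atoms p, closed under modus ponens. -/
inductive StableProv : Formula → Prop
  | intuit (a : Formula) : IProv a → StableProv a
  | stab (p : ℕ) : StableProv (stab p)
  | mp (a b : Formula) : StableProv (.imp a b) → StableProv a → StableProv b

/-- Boolean evaluation of a formula under a valuation of its atoms. -/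
def Formula.eval (v : ℕ → Bool) : Formula → Bool
  | .atom p => v p
  | .neg a => !(a.eval v)
  | .and a b => a.eval v && b.eval v
  | .or a b => a.eval v || b.eval v
  | .imp a b => !(a.eval v) || b.eval v

/-- A classical tautology: true under every Boolean valuation. -/
def Tautology (φ : Formula) : Prop := ∀ v, φ.eval v = true

/-- Uniform substitution of formulas for atoms, applied homomorphically. -/
def Formula.subst (σ : ℕ → Formula) : Formula → Formula
  | .atom p => σ p
  | .neg a => .neg (a.subst σ)
  | .and a b => .and (a.subst σ) (b.subst σ)
  | .or a b => .or (a.subst σ) (b.subst σ)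
  | .imp a b => .imp (a.subst σ) (b.subst σ)

/-- The atoms occurring in a formula. -/
def Formula.atoms : Formula → List ℕ
  | .atom p => [p]
  | .neg a => a.atoms
  | .and a b => a.atoms ++ b.atoms
  | .or a b => a.atoms ++ b.atoms
  | .imp a b => a.atoms ++ b.atoms

/-- Conjunction of a nonempty list of formulas. -/
def conjList (f : Formula) : List Formula → Formula
  | [] => f
  | g :: gs => .and f (conjList g gs)

/-- The conjunction (¬¬p → p) ∧ … of stability instances for the atoms
    `p :: ps`. -/
def stabConj (p : ℕ) (ps : List ℕ) : Formula :=
  conjList (stab p) (ps.map stab)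


/-! ### Part 3: ¬¬p → p is not intuitionistically provable -/

def himp (x y : Fin 3) : Fin 3 := if x ≤ y then 2 else y
def hneg (x : Fin 3) : Fin 3 := if x = 0 then 2 else 0

/-- Evaluation into the 3-element Gödel algebra {0,1,2}. -/
def heval (v : ℕ → Fin 3) : Formula → Fin 3
  | .atom p => v p
  | .neg a => hneg (heval v a)
  | .and a b => min (heval v a) (heval v b)
  | .or a b => max (heval v a) (heval v b)
  | .imp a b => himp (heval v a) (heval v b)

theorem IProv.heval_eq {φ : Formula} (h : IProv φ) (v : ℕ → Fin 3) :
    heval v φ = 2 := by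
  induction h with
  | mp a b _ _ ih1 ih2 =>
      simp only [heval] at ih1
      revert ih1 ih2
      generalize heval v b = y; generalize heval v a = x
      revert x y; decide
  | s a b c =>
      simp only [heval]
      generalize heval v c = z; generalize heval v b = y; generalize heval v a = x
      revert x y z; decide
  | orE a b c =>
      simp only [heval]
      generalize heval v c = z; generalize heval v b = y; generalize heval v a = x
      revert x y z; decide
  | _ =>
      rename_i a b
      simp only [heval]
      generalize heval v b = y; generalize heval v a = x
      revert x y; decide

theorem not_IProv_stab (p : ℕ) : ¬ IProv (stab p) := by
  intro h
  have := h.heval_eq (fun _ => 1)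
  simp [stab, heval, himp, hneg] at this
/-! ### A dialogue-oriented sequent calculus -/

/-- Judgments: `inl g` = "win with pending defense options `g`",
    `inr δ` = "win after asserting `δ`". -/
abbrev Judg := List Formula ⊕ Formula

/-- The calculus, parametrized by the condition `ax` under which P may
    assert an atom. -/
inductive W (ax : List Formula → ℕ → Prop) : List Formula → Judg → Prop
  | defend {Γ g δ} : δ ∈ g → W ax Γ (.inr δ) → W ax Γ (.inl g)
  | aAndL {Γ g a b} : (Formula.and a b) ∈ Γ → W ax (a::Γ) (.inl g) → W ax Γ (.inl g)
  | aAndR {Γ g a b} : (Formula.and a b) ∈ Γ → W ax (b::Γ) (.inl g) → W ax Γ (.inl g)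
  | aOr {Γ g a b} : (Formula.or a b) ∈ Γ → W ax (a::Γ) (.inl g) → W ax (b::Γ) (.inl g) →
      W ax Γ (.inl g)
  | aImp {Γ g a b} : (Formula.imp a b) ∈ Γ → W ax Γ (.inr a) → W ax (b::Γ) (.inl g) →
      W ax Γ (.inl g)
  | aNeg {Γ g a} : (Formula.neg a) ∈ Γ → W ax Γ (.inr a) → W ax Γ (.inl g)
  | rAtom {Γ p} : ax Γ p → W ax Γ (.inr (.atom p))
  | rAnd {Γ a b} : W ax Γ (.inl [a]) → W ax Γ (.inl [b]) → W ax Γ (.inr (.and a b))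
  | rOr {Γ a b} : W ax Γ (.inl [a, b]) → W ax Γ (.inr (.or a b))
  | rImp {Γ a b} : W ax (a::Γ) (.inl [b]) → W ax Γ (.inr (.imp a b))
  | rNeg {Γ a} : W ax (a::Γ) (.inl []) → W ax Γ (.inr (.neg a))

/-- The intuitionistic atom condition. -/
def axI (Γ : List Formula) (p : ℕ) : Prop := Formula.atom p ∈ Γ

/-- The D10′ atom condition. -/
def axP (Γ : List Formula) (p : ℕ) : Prop :=
  Formula.atom p ∈ Γ ∨ Formula.neg (.neg (.atom p)) ∈ Γ

theorem W.mono {ax ax' : List Formula → ℕ → Prop}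
    (hax : ∀ Γ p, ax Γ p → ax' Γ p) {Γ J} (h : W ax Γ J) : W ax' Γ J := by
  induction h with
  | defend h1 _ ih => exact .defend h1 ih
  | aAndL h1 _ ih => exact .aAndL h1 ih
  | aAndR h1 _ ih => exact .aAndR h1 ih
  | aOr h1 _ _ ih1 ih2 => exact .aOr h1 ih1 ih2
  | aImp h1 _ _ ih1 ih2 => exact .aImp h1 ih1 ih2
  | aNeg h1 _ ih => exact .aNeg h1 ih
  | rAtom h1 => exact .rAtom (hax _ _ h1)
  | rAnd _ _ ih1 ih2 => exact .rAnd ih1 ih2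
  | rOr _ ih => exact .rOr ih
  | rImp _ ih => exact .rImp ih
  | rNeg _ ih => exact .rNeg ih

section Weak
variable {ax : List Formula → ℕ → Prop}
    (haxmono : ∀ Γ Γ' p, Γ ⊆ Γ' → ax Γ p → ax Γ' p)
include haxmono

/-- Weakening, in context and in pending options. -/
theorem W.weak {Γ J} (h : W ax Γ J) :
    ∀ {Γ'}, Γ ⊆ Γ' → (∀ {g g'}, J = .inl g → g ⊆ g' → W ax Γ' (.inl g')) ∧
      (∀ {δ}, J = .inr δ → W ax Γ' (.inr δ)) := by
  induction h with
  | @defend _ g0 δ0 h1 _ ih =>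
      intro Γ' hΓ
      refine ⟨?_, by rintro _ ⟨⟩⟩
      rintro g g' ⟨⟩ hg
      exact .defend (hg h1) ((ih hΓ).2 rfl)
  | aAndL h1 _ ih =>
      intro Γ' hΓ
      refine ⟨?_, by rintro _ ⟨⟩⟩
      rintro g g' ⟨⟩ hg
      exact .aAndL (hΓ h1) ((ih (List.cons_subset_cons _ hΓ)).1 rfl hg)
  | aAndR h1 _ ih =>
      intro Γ' hΓ
      refine ⟨?_, by rintro _ ⟨⟩⟩
      rintro g g' ⟨⟩ hg
      exact .aAndR (hΓ h1) ((ih (List.cons_subset_cons _ hΓ)).1 rfl hg)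
  | aOr h1 _ _ ih1 ih2 =>
      intro Γ' hΓ
      refine ⟨?_, by rintro _ ⟨⟩⟩
      rintro g g' ⟨⟩ hg
      exact .aOr (hΓ h1) ((ih1 (List.cons_subset_cons _ hΓ)).1 rfl hg)
        ((ih2 (List.cons_subset_cons _ hΓ)).1 rfl hg)
  | aImp h1 _ _ ih1 ih2 =>
      intro Γ' hΓ
      refine ⟨?_, by rintro _ ⟨⟩⟩
      rintro g g' ⟨⟩ hg
      exact .aImp (hΓ h1) ((ih1 hΓ).2 rfl) ((ih2 (List.cons_subset_cons _ hΓ)).1 rfl hg)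
  | aNeg h1 _ ih =>
      intro Γ' hΓ
      refine ⟨?_, by rintro _ ⟨⟩⟩
      rintro g g' ⟨⟩ hg
      exact .aNeg (hΓ h1) ((ih hΓ).2 rfl)
  | rAtom h1 =>
      intro Γ' hΓ
      refine ⟨by rintro _ _ ⟨⟩, ?_⟩
      rintro δ ⟨⟩
      exact .rAtom (haxmono _ _ _ hΓ h1)
  | rAnd _ _ ih1 ih2 =>
      intro Γ' hΓ
      refine ⟨by rintro _ _ ⟨⟩, ?_⟩
      rintro δ ⟨⟩
      exact .rAnd ((ih1 hΓ).1 rfl (List.Subset.refl _)) ((ih2 hΓ).1 rfl (List.Subset.refl _))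
  | rOr _ ih =>
      intro Γ' hΓ
      refine ⟨by rintro _ _ ⟨⟩, ?_⟩
      rintro δ ⟨⟩
      exact .rOr ((ih hΓ).1 rfl (List.Subset.refl _))
  | rImp _ ih =>
      intro Γ' hΓ
      refine ⟨by rintro _ _ ⟨⟩, ?_⟩
      rintro δ ⟨⟩
      exact .rImp ((ih (List.cons_subset_cons _ hΓ)).1 rfl (List.Subset.refl _))
  | rNeg _ ih =>
      intro Γ' hΓ
      refine ⟨by rintro _ _ ⟨⟩, ?_⟩
      rintro δ ⟨⟩
      exact .rNeg ((ih (List.cons_subset_cons _ hΓ)).1 rfl (List.Subset.refl _))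

theorem W.weakL {Γ Γ' g} (h : W ax Γ (.inl g)) (hΓ : Γ ⊆ Γ') : W ax Γ' (.inl g) :=
  (W.weak haxmono h hΓ).1 rfl (List.Subset.refl _)

theorem W.weakG {Γ g g'} (h : W ax Γ (.inl g)) (hg : g ⊆ g') : W ax Γ (.inl g') :=
  (W.weak haxmono h (List.Subset.refl _)).1 rfl hg

theorem W.weakR {Γ Γ' δ} (h : W ax Γ (.inr δ)) (hΓ : Γ ⊆ Γ') : W ax Γ' (.inr δ) :=
  (W.weak haxmono h hΓ).2 rfl

end Weak
/-! ### helpers -/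
theorem sub_lift {Δ Γ : List Formula} {a c : Formula} (h : Δ ⊆ a :: Γ) :
    c :: Δ ⊆ a :: c :: Γ := by
  intro x hx
  rcases List.mem_cons.1 hx with rfl | hx
  · exact List.mem_cons_of_mem _ (List.mem_cons_self)
  · rcases List.mem_cons.1 (h hx) with rfl | hx
    · exact List.mem_cons_self
    · exact List.mem_cons_of_mem _ (List.mem_cons_of_mem _ hx)

theorem sub_tail {Γ : List Formula} {c : Formula} : Γ ⊆ c :: Γ :=
  fun _ hx => List.mem_cons_of_mem _ hx
/-! ### Identity, cut, and soundness of IProv for the calculus -/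

theorem axI_mono : ∀ Γ Γ' p, Γ ⊆ Γ' → axI Γ p → axI Γ' p := fun _ _ _ h hp => h hp

theorem axP_mono : ∀ Γ Γ' p, Γ ⊆ Γ' → axP Γ p → axP Γ' p :=
  fun _ _ _ h hp => hp.imp (@h _) (@h _)

theorem haxmemI : ∀ Γ p, Formula.atom p ∈ Γ → axI Γ p := fun _ _ h => h

/-- Identity: a formula in the context can be asserted. -/
theorem idR {ax : List Formula → ℕ → Prop}
    (haxmem : ∀ Γ p, Formula.atom p ∈ Γ → ax Γ p) :
    ∀ (a : Formula) {Γ}, a ∈ Γ → W ax Γ (.inr a) := by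
  intro a
  induction a with
  | atom p => exact fun h => .rAtom (haxmem _ _ h)
  | neg a ih =>
      intro Γ h
      exact .rNeg (.aNeg (List.mem_cons_of_mem _ h) (ih (List.mem_cons_self)))
  | and a b iha ihb =>
      intro Γ h
      exact .rAnd (.aAndL h (.defend (by simp) (iha (List.mem_cons_self))))
        (.aAndR h (.defend (by simp) (ihb (List.mem_cons_self))))
  | or a b iha ihb =>
      intro Γ h
      exact .rOr (.aOr h
        (.defend (by simp) (iha (List.mem_cons_self)))
        (.defend (by simp) (ihb (List.mem_cons_self))))
  | imp a b iha ihb =>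
      intro Γ h
      exact .rImp (.aImp (List.mem_cons_of_mem _ h) (iha (List.mem_cons_self))
        (.defend (by simp) (ihb (List.mem_cons_self))))

/-- Cut on a list of pending options. -/
theorem cutList : ∀ {Γ J}, W axI Γ J → ∀ {h g : List Formula}, J = .inl h →
    (∀ δ ∈ h, ∀ Γ', Γ ⊆ Γ' → W axI Γ' (.inr δ) → W axI Γ' (.inl g)) →
    W axI Γ (.inl g) := by
  intro Γ J hd
  induction hd with
  | defend hδ hr _ =>
      rintro h g ⟨⟩ H
      exact H _ hδ _ (List.Subset.refl _) hr
  | aAndL hm _ ih =>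
      rintro h g ⟨⟩ H
      exact .aAndL hm (ih rfl fun δ hδ Γ' hsub => H δ hδ Γ' (List.Subset.trans sub_tail hsub))
  | aAndR hm _ ih =>
      rintro h g ⟨⟩ H
      exact .aAndR hm (ih rfl fun δ hδ Γ' hsub => H δ hδ Γ' (List.Subset.trans sub_tail hsub))
  | aOr hm _ _ ih1 ih2 =>
      rintro h g ⟨⟩ H
      exact .aOr hm
        (ih1 rfl fun δ hδ Γ' hsub => H δ hδ Γ' (List.Subset.trans sub_tail hsub))
        (ih2 rfl fun δ hδ Γ' hsub => H δ hδ Γ' (List.Subset.trans sub_tail hsub))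
  | aImp hm hr _ _ ih2 =>
      rintro h g ⟨⟩ H
      exact .aImp hm hr (ih2 rfl fun δ hδ Γ' hsub => H δ hδ Γ' (List.Subset.trans sub_tail hsub))
  | aNeg hm hr =>
      rintro h g ⟨⟩ H
      exact .aNeg hm hr
  | rAtom h1 => rintro h g ⟨⟩
  | rAnd h1 h2 => rintro h g ⟨⟩
  | rOr h1 => rintro h g ⟨⟩
  | rImp h1 => rintro h g ⟨⟩
  | rNeg h1 => rintro h g ⟨⟩

/-- The main cut lemma, inner induction. -/
theorem cut_main (a : Formula)
    (IH : ∀ b : Formula, sizeOf b < sizeOf a → ∀ {Δ J}, W axI Δ J → ∀ {Γ}, Δ ⊆ b :: Γ →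
      W axI Γ (.inr b) → W axI Γ J) :
    ∀ {Δ J}, W axI Δ J → ∀ {Γ}, Δ ⊆ a :: Γ → W axI Γ (.inr a) → W axI Γ J := by
  intro Δ J hd
  induction hd with
  | defend hδ _ ih =>
      intro Γ hsub ha
      exact .defend hδ (ih hsub ha)
  | @aAndL Δ' g c d hm _ ih =>
      intro Γ hsub ha
      have hW : W axI (c :: Γ) (.inl g) :=
        ih (sub_lift hsub) (W.weakR axI_mono ha sub_tail)
      rcases List.mem_cons.1 (hsub hm) with heq | hm'
      · subst heq
        cases ha with
        | rAnd h1 h2 =>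
          refine cutList h1 rfl ?_
          intro δ hδ Γ' hsub' hr
          rcases List.mem_singleton.1 hδ with rfl
          exact IH δ (by first | (simp; omega) | simp) (W.weakL axI_mono hW (List.cons_subset_cons _ hsub'))
            (List.Subset.refl _) hr
      · exact .aAndL hm' hW
  | @aAndR Δ' g c d hm _ ih =>
      intro Γ hsub ha
      have hW : W axI (d :: Γ) (.inl g) :=
        ih (sub_lift hsub) (W.weakR axI_mono ha sub_tail)
      rcases List.mem_cons.1 (hsub hm) with heq | hm'
      · subst heq
        cases ha with
        | rAnd h1 h2 =>
          refine cutList h2 rfl ?_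
          intro δ hδ Γ' hsub' hr
          rcases List.mem_singleton.1 hδ with rfl
          exact IH δ (by first | (simp; omega) | simp) (W.weakL axI_mono hW (List.cons_subset_cons _ hsub'))
            (List.Subset.refl _) hr
      · exact .aAndR hm' hW
  | @aOr Δ' g c d hm _ _ ih1 ih2 =>
      intro Γ hsub ha
      have hW1 : W axI (c :: Γ) (.inl g) :=
        ih1 (sub_lift hsub) (W.weakR axI_mono ha sub_tail)
      have hW2 : W axI (d :: Γ) (.inl g) :=
        ih2 (sub_lift hsub) (W.weakR axI_mono ha sub_tail)
      rcases List.mem_cons.1 (hsub hm) with heq | hm'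
      · subst heq
        cases ha with
        | rOr h1 =>
          refine cutList h1 rfl ?_
          intro δ hδ Γ' hsub' hr
          have hδ' : δ = c ∨ δ = d := by simpa using hδ
          rcases hδ' with rfl | rfl
          · exact IH δ (by first | (simp; omega) | simp) (W.weakL axI_mono hW1 (List.cons_subset_cons _ hsub'))
              (List.Subset.refl _) hr
          · exact IH δ (by first | (simp; omega) | simp) (W.weakL axI_mono hW2 (List.cons_subset_cons _ hsub'))
              (List.Subset.refl _) hr
      · exact .aOr hm' hW1 hW2
  | @aImp Δ' g c d hm _ _ ihr ihw =>
      intro Γ hsub ha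
      have hc : W axI Γ (.inr c) := ihr hsub ha
      have hd' : W axI (d :: Γ) (.inl g) :=
        ihw (sub_lift hsub) (W.weakR axI_mono ha sub_tail)
      rcases List.mem_cons.1 (hsub hm) with heq | hm'
      · subst heq
        cases ha with
        | rImp h0 =>
          have h1 : W axI Γ (.inl [d]) :=
            IH c (by first | (simp; omega) | simp) h0 (List.Subset.refl _) hc
          refine cutList h1 rfl ?_
          intro δ hδ Γ' hsub' hr
          rcases List.mem_singleton.1 hδ with rfl
          exact IH δ (by first | (simp; omega) | simp) (W.weakL axI_mono hd' (List.cons_subset_cons _ hsub'))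
            (List.Subset.refl _) hr
      · exact .aImp hm' hc hd'
  | @aNeg Δ' g c hm _ ihr =>
      intro Γ hsub ha
      have hc : W axI Γ (.inr c) := ihr hsub ha
      rcases List.mem_cons.1 (hsub hm) with heq | hm'
      · subst heq
        cases ha with
        | rNeg h0 =>
          have h1 : W axI Γ (.inl []) :=
            IH c (by first | (simp; omega) | simp) h0 (List.Subset.refl _) hc
          exact W.weakG axI_mono h1 (List.nil_subset _)
      · exact .aNeg hm' hc
  | @rAtom Δ' p h1 =>
      intro Γ hsub ha
      rcases List.mem_cons.1 (hsub h1) with heq | hm'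
      · subst heq; exact ha
      · exact .rAtom hm'
  | rAnd _ _ ih1 ih2 =>
      intro Γ hsub ha
      exact .rAnd (ih1 hsub ha) (ih2 hsub ha)
  | rOr _ ih =>
      intro Γ hsub ha
      exact .rOr (ih hsub ha)
  | rImp _ ih =>
      intro Γ hsub ha
      exact .rImp (ih (sub_lift hsub) (W.weakR axI_mono ha sub_tail))
  | rNeg _ ih =>
      intro Γ hsub ha
      exact .rNeg (ih (sub_lift hsub) (W.weakR axI_mono ha sub_tail))

theorem cutR : ∀ (a : Formula) {Δ J}, W axI Δ J → ∀ {Γ}, Δ ⊆ a :: Γ →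
    W axI Γ (.inr a) → W axI Γ J := by
  suffices h : ∀ (n : ℕ) (a : Formula), sizeOf a < n → ∀ {Δ J}, W axI Δ J → ∀ {Γ},
      Δ ⊆ a :: Γ → W axI Γ (.inr a) → W axI Γ J by
    intro a; exact h (sizeOf a + 1) a (by omega)
  intro n
  induction n with
  | zero => omega
  | succ n ihn =>
      intro a ha
      exact cut_main a (fun b hb => ihn b (by omega))

theorem invNil {g} (h : W axI [] (.inl g)) : ∃ δ ∈ g, W axI [] (.inr δ) := by
  cases h with
  | defend hδ hr => exact ⟨_, hδ, hr⟩
  | aAndL hm _ => exact absurd hm List.not_mem_nil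
  | aAndR hm _ => exact absurd hm List.not_mem_nil
  | aOr hm _ _ => exact absurd hm List.not_mem_nil
  | aImp hm _ _ => exact absurd hm List.not_mem_nil
  | aNeg hm _ => exact absurd hm List.not_mem_nil

theorem dfd' {ax : List Formula → ℕ → Prop} {Γ δ g} (h : W ax Γ (.inr δ))
    (hm : δ ∈ g := by simp) : W ax Γ (.inl g) :=
  .defend hm h

/-- Soundness of the Hilbert system for the calculus. -/
theorem IProv_W {φ : Formula} (h : IProv φ) : W axI [] (.inr φ) := by
  have id' := idR haxmemI
  induction h with
  | k a b =>
      exact .rImp (dfd' (δ := b.imp a) (.rImp (dfd' (δ := a) (id' a (by simp)))))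
  | s a b c =>
      refine .rImp (dfd' (δ := (a.imp b).imp (a.imp c)) (.rImp (dfd' (δ := a.imp c) (.rImp ?_))))
      refine .aImp (show a.imp b ∈ _ by simp) (id' a (by simp)) ?_
      refine .aImp (show a.imp (b.imp c) ∈ _ by simp) (id' a (by simp)) ?_
      refine .aImp (show b.imp c ∈ _ by simp) (id' b (by simp)) ?_
      exact dfd' (δ := c) (id' c (by simp))
  | andE1 a b =>
      exact .rImp (.aAndL (a := a) (b := b) (by simp) (dfd' (δ := a) (id' a (by simp))))
  | andE2 a b =>
      exact .rImp (.aAndR (a := a) (b := b) (by simp) (dfd' (δ := b) (id' b (by simp))))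
  | andI a b =>
      refine .rImp (dfd' (δ := b.imp (a.and b)) (.rImp (dfd' (δ := a.and b) (.rAnd ?_ ?_))))
      · exact dfd' (δ := a) (id' a (by simp))
      · exact dfd' (δ := b) (id' b (by simp))
  | orI1 a b =>
      exact .rImp (dfd' (δ := a.or b) (.rOr (dfd' (δ := a) (id' a (by simp)))))
  | orI2 a b =>
      exact .rImp (dfd' (δ := a.or b) (.rOr (dfd' (δ := b) (id' b (by simp)))))
  | orE a b c =>
      refine .rImp (dfd' (δ := (b.imp c).imp ((a.or b).imp c)) (.rImp (dfd' (δ := (a.or b).imp c) (.rImp ?_))))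
      refine .aOr (show a.or b ∈ _ by simp) ?_ ?_
      · exact .aImp (show a.imp c ∈ _ by simp) (id' a (by simp))
          (dfd' (δ := c) (id' c (by simp)))
      · exact .aImp (show b.imp c ∈ _ by simp) (id' b (by simp))
          (dfd' (δ := c) (id' c (by simp)))
  | negI a b =>
      refine .rImp (dfd' (δ := (a.imp b.neg).imp a.neg) (.rImp (dfd' (δ := a.neg) (.rNeg ?_))))
      refine .aImp (show a.imp b ∈ _ by simp) (id' a (by simp)) ?_
      refine .aImp (show a.imp b.neg ∈ _ by simp) (id' a (by simp)) ?_
      exact .aNeg (show Formula.neg b ∈ _ by simp) (id' b (by simp))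
  | negE a b =>
      refine .rImp (dfd' (δ := a.imp b) (.rImp ?_))
      exact .aNeg (show Formula.neg a ∈ _ by simp) (id' a (by simp))
  | mp a b h1 h2 ih1 ih2 =>
      cases ih1 with
      | rImp h0 =>
        have h1' : W axI [] (.inl [b]) := cutR a h0 (List.Subset.refl _) ih2
        rcases invNil h1' with ⟨δ, hδ, h2'⟩
        rcases List.mem_singleton.1 hδ with rfl
        exact h2'
/-! ### Dialogue toolkit -/

theorem getElem?_some_lt {α : Type} {l : List α} {n : ℕ} {a : α} (h : l[n]? = some a) :
    n < l.length := by
  by_contra hn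
  rw [List.getElem?_eq_none (by omega)] at h
  exact nomatch h

@[simp] theorem nextPos_extend (d : Dialogue) (m : Move) :
    nextPos (d.extend m) = nextPos d + 1 := by
  simp [nextPos, Dialogue.extend]

theorem moveAt_lt {d : Dialogue} {j : ℕ} {mv : Move} (h : d.moveAt j = some mv) :
    j < nextPos d := by
  unfold Dialogue.moveAt at h
  split at h
  · exact nomatch h
  · have := getElem?_some_lt h
    unfold nextPos; omega

theorem stmtAt_lt {d : Dialogue} {j : ℕ} {s : Statement} (h : d.stmtAt j = some s) :
    j < nextPos d := by
  unfold Dialogue.stmtAt at h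
  split at h
  · unfold nextPos; omega
  · rcases Option.map_eq_some_iff.1 h with ⟨mv, hmv, _⟩
    have := getElem?_some_lt hmv
    unfold nextPos; omega

theorem moveAt_extend {d : Dialogue} {m : Move} {j : ℕ} :
    (d.extend m).moveAt j = if j = nextPos d then some m else d.moveAt j := by
  unfold Dialogue.moveAt Dialogue.extend nextPos
  rcases Nat.eq_zero_or_pos j with rfl | hj
  · simp
  · simp only [Nat.pos_iff_ne_zero.1 hj, if_neg (Nat.pos_iff_ne_zero.1 hj)]
    by_cases h : j = d.moves.length + 1
    · subst h
      simp [List.getElem?_concat_length]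
    · rw [if_neg h]
      rcases Nat.lt_or_ge (j-1) d.moves.length with hlt | hge
      · rw [List.getElem?_append]
        simp [hlt]
      · rw [List.getElem?_eq_none (l := d.moves ++ [m]) (by simp; omega), List.getElem?_eq_none (by omega)]

@[simp] theorem extend_initial (d : Dialogue) (m : Move) :
    (d.extend m).initial = d.initial := rfl

theorem stmtAt_extend {d : Dialogue} {m : Move} {j : ℕ} :
    (d.extend m).stmtAt j = if j = nextPos d then some m.statement else d.stmtAt j := by
  unfold Dialogue.stmtAt
  rcases Nat.eq_zero_or_pos j with rfl | hj
  · have : (0:ℕ) ≠ nextPos d := by unfold nextPos; omega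
    simp [this, Dialogue.extend]
  · have h0 : ¬ (j = 0) := by omega
    rw [if_neg h0, if_neg h0]
    have : (d.extend m).moves[j-1]? = ((d.extend m).moveAt j) := by
      unfold Dialogue.moveAt; rw [if_neg h0]
    rw [this, moveAt_extend]
    by_cases h : j = nextPos d
    · simp [h]
    · rw [if_neg h, if_neg h]
      unfold Dialogue.moveAt; rw [if_neg h0]

theorem moveAt_extend_lt {d : Dialogue} {m : Move} {j : ℕ} (h : j < nextPos d) :
    (d.extend m).moveAt j = d.moveAt j := by
  rw [moveAt_extend, if_neg (by omega)]

theorem moveAt_extend_self {d : Dialogue} {m : Move} :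
    (d.extend m).moveAt (nextPos d) = some m := by
  rw [moveAt_extend, if_pos rfl]

theorem stmtAt_extend_lt {d : Dialogue} {m : Move} {j : ℕ} (h : j < nextPos d) :
    (d.extend m).stmtAt j = d.stmtAt j := by
  rw [stmtAt_extend, if_neg (by omega)]

theorem stmtAt_extend_self {d : Dialogue} {m : Move} :
    (d.extend m).stmtAt (nextPos d) = some m.statement := by
  rw [stmtAt_extend, if_pos rfl]

theorem moveAt_nextPos {d : Dialogue} {j : ℕ} (h1 : 1 ≤ j) (h2 : j < nextPos d) :
    ∃ mv, d.moveAt j = some mv := by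
  unfold Dialogue.moveAt nextPos at *
  rw [if_neg (by omega)]
  rcases List.getElem?_eq_some_iff.2 ⟨(by omega : j - 1 < d.moves.length), rfl⟩ with h
  exact ⟨_, h⟩

/-- The new move is a move at `nextPos d`, older positions unchanged:
    `IsDefenseOf` transfer. -/
theorem isDefenseOf_extend {d : Dialogue} {m : Move} {j r : ℕ} (hj : j < nextPos d) :
    IsDefenseOf (d.extend m) j r ↔ IsDefenseOf d j r := by
  unfold IsDefenseOf
  rw [moveAt_extend_lt hj]

theorem isAttackPos_extend {d : Dialogue} {m : Move} {j : ℕ} (hj : j < nextPos d) :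
    IsAttackPos (d.extend m) j ↔ IsAttackPos d j := by
  unfold IsAttackPos
  rw [moveAt_extend_lt hj]
/-! ### Legality lemmas -/

theorem append_getElem? {α : Type} {l : List α} {m mv : α} {i : ℕ}
    (h : (l ++ [m])[i]? = some mv) :
    (i < l.length ∧ l[i]? = some mv) ∨ (i = l.length ∧ mv = m) := by
  rcases Nat.lt_trichotomy i l.length with hlt | heq | hgt
  · left
    refine ⟨hlt, ?_⟩
    rw [List.getElem?_append] at h
    simpa [hlt] using h
  · right
    subst heq
    rw [List.getElem?_concat_length] at h
    exact ⟨rfl, (Option.some_injective _ h).symm⟩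
  · rw [List.getElem?_eq_none (by simp; omega)] at h
    exact nomatch h

theorem legal_unfold {d : Dialogue} (h : Legal rulesetEprime d) :
    ParticleOK d ∧ D10prime d ∧ D11 d ∧ D12 d ∧ D13 d ∧ ERule d := by
  obtain ⟨h1, h2, h3, h4, h5, h6⟩ := h
  exact ⟨h1, h2, h3, h4, h5, h6⟩

theorem legal_mk {d : Dialogue} (h1 : ParticleOK d) (h2 : D10prime d) (h3 : D11 d)
    (h4 : D12 d) (h5 : D13 d) (h6 : ERule d) : Legal rulesetEprime d :=
  ⟨h1, h2, h3, h4, h5, h6⟩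

theorem moveOK_extend {d : Dialogue} {m : Move} {n : ℕ} {mv : Move}
    (h : MoveOK d n mv) (hn : n ≤ nextPos d) : MoveOK (d.extend m) n mv := by
  obtain ⟨hr, hp, hatk, hdef⟩ := h
  refine ⟨hr, hp, ?_, ?_⟩
  · intro ha
    obtain ⟨ψ, hψ, hA⟩ := hatk ha
    exact ⟨ψ, by rw [stmtAt_extend_lt (by omega)]; exact hψ, hA⟩
  · intro ha
    obtain ⟨a, χ, hma, haa, hsa, hD⟩ := hdef ha
    refine ⟨a, χ, ?_, haa, ?_, hD⟩
    · rw [moveAt_extend_lt (by omega)]; exact hma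
    · rw [stmtAt_extend_lt (stmtAt_lt hsa)]; exact hsa

theorem moveAt_ge_one {d : Dialogue} {n : ℕ} {mv : Move} (h : d.moveAt n = some mv) :
    1 ≤ n := by
  unfold Dialogue.moveAt at h
  split at h
  · exact nomatch h
  · omega

theorem moveAt_moveOK {d : Dialogue} (hpart : ParticleOK d) {n : ℕ} {mv : Move}
    (h : d.moveAt n = some mv) : MoveOK d n mv := by
  have h1 := moveAt_ge_one h
  unfold Dialogue.moveAt at h
  rw [if_neg (by omega)] at h
  have := hpart (n-1) mv h
  rwa [Nat.sub_add_cancel h1] at this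

theorem openAt_extend {d : Dialogue} {m : Move} {r k : ℕ} (hr : r < nextPos d)
    (hk : k ≤ nextPos d) : OpenAt (d.extend m) r k ↔ OpenAt d r k := by
  unfold OpenAt
  rw [isAttackPos_extend hr]
  constructor
  · rintro ⟨h1, h2⟩
    refine ⟨h1, fun ⟨j, hj, hd⟩ => h2 ⟨j, hj, ?_⟩⟩
    rwa [isDefenseOf_extend (by omega)]
  · rintro ⟨h1, h2⟩
    refine ⟨h1, fun ⟨j, hj, hd⟩ => h2 ⟨j, hj, ?_⟩⟩
    rwa [isDefenseOf_extend (by omega)] at hd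

theorem openAt_mono {d : Dialogue} {r k k' : ℕ} (h : OpenAt d r k') (hk : k ≤ k') :
    OpenAt d r k :=
  ⟨h.1, fun ⟨j, hj, hd⟩ => h.2 ⟨j, by omega, hd⟩⟩

/-- Master lemma: legality of a P-move extension. -/
theorem legal_extend_P {d : Dialogue} {m : Move}
    (hleg : Legal rulesetEprime d) (hP : PTurn d)
    (h1 : m.ref % 2 = 1) (h2 : m.ref < nextPos d)
    (h3 : m.isAttack = true → ∃ ψ, d.stmtAt m.ref = some (.form ψ) ∧ Attacks m.statement ψ)
    (h4 : m.isAttack = false → (∃ a χ, d.moveAt m.ref = some a ∧ a.isAttack = true ∧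
        d.stmtAt a.ref = some (.form χ) ∧ Defends χ a.statement m.statement) ∧
        (¬ ∃ j, IsDefenseOf d j m.ref) ∧
        (¬ ∃ r', m.ref < r' ∧ r' < nextPos d ∧ r' % 2 = 1 ∧ OpenAt d r' (nextPos d)))
    (h5 : ∀ p, m.statement = .form (.atom p) → ∃ j, j % 2 = 1 ∧
        (d.stmtAt j = some (.form (.atom p)) ∨
         d.stmtAt j = some (.form (.neg (.neg (.atom p)))))) :
    Legal rulesetEprime (d.extend m) := by
  obtain ⟨hpart, hD10, hD11, hD12, hD13, hE⟩ := legal_unfold hleg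
  have hPn : nextPos d % 2 = 0 := hP
  -- new moves at position `nextPos d`
  have hself : (d.extend m).moveAt (nextPos d) = some m := moveAt_extend_self
  have hnew : ∀ {j mv}, (d.extend m).moveAt j = some mv → j < nextPos d → d.moveAt j = some mv := by
    intro j mv h hj; rwa [moveAt_extend_lt hj] at h
  refine legal_mk ?_ ?_ ?_ ?_ ?_ ?_
  · -- ParticleOK
    intro i mv hmv
    rcases append_getElem? hmv with ⟨hlt, hold⟩ | ⟨heq, rfl⟩
    · exact moveOK_extend (hpart i mv hold) (by unfold nextPos; omega)
    · subst heq
      have hn : d.moves.length + 1 = nextPos d := rfl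
      rw [hn]
      refine ⟨h2, by omega, ?_, ?_⟩
      · intro ha
        obtain ⟨ψ, hψ, hA⟩ := h3 ha
        exact ⟨ψ, by rw [stmtAt_extend_lt h2]; exact hψ, hA⟩
      · intro ha
        obtain ⟨⟨a, χ, hma, haa, hsa, hD⟩, _, _⟩ := h4 ha
        exact ⟨a, χ, by rw [moveAt_extend_lt h2]; exact hma, haa,
          by rw [stmtAt_extend_lt (stmtAt_lt hsa)]; exact hsa, hD⟩
  · -- D10′
    intro n p hn hstmt
    rw [stmtAt_extend] at hstmt
    split at hstmt
    · rename_i heq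
      obtain ⟨j, hj1, hj2⟩ := h5 p (Option.some_injective _ hstmt)
      have hjlt : j < nextPos d := by
        rcases hj2 with h | h
        · exact stmtAt_lt h
        · exact stmtAt_lt h
      refine ⟨j, by omega, hj1, ?_⟩
      rcases hj2 with h | h
      · left; rw [stmtAt_extend_lt hjlt]; exact h
      · right; rw [stmtAt_extend_lt hjlt]; exact h
    · obtain ⟨j, hj1, hj2, hj3⟩ := hD10 n p hn hstmt
      have hjlt : j < nextPos d := by
        have := stmtAt_lt hstmt; omega
      refine ⟨j, hj1, hj2, ?_⟩
      rcases hj3 with h | h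
      · left; rw [stmtAt_extend_lt hjlt]; exact h
      · right; rw [stmtAt_extend_lt hjlt]; exact h
  · -- D11
    intro n r hdef
    obtain ⟨mv, hmv, hmv2, hmv3⟩ := hdef
    have hnlt : n < nextPos d + 1 := by
      have := moveAt_lt hmv; simpa using this
    rcases Nat.lt_or_ge n (nextPos d) with hlt | hge
    · -- old defense
      have hold : d.moveAt n = some mv := hnew hmv hlt
      obtain ⟨hop, hno⟩ := hD11 n r ⟨mv, hold, hmv2, hmv3⟩
      have hrn : r < n := by
        have := (moveAt_moveOK hpart hold).1; omega
      constructor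
      · rwa [openAt_extend (by omega) (by omega)]
      · rintro ⟨r', hr1, hr2, hr3, hr4⟩
        exact hno ⟨r', hr1, hr2, hr3, by rwa [openAt_extend (by omega) (by omega)] at hr4⟩
    · -- the new move
      have hneq : n = nextPos d := by omega
      subst hneq
      rw [hself] at hmv
      cases Option.some_injective _ hmv
      obtain ⟨⟨a, χ, hma, haa, hsa, hD⟩, hnd, hnr⟩ := h4 hmv2
      subst hmv3
      constructor
      · refine ⟨⟨a, by rw [moveAt_extend_lt h2]; exact hma, haa⟩, ?_⟩
        rintro ⟨j, hj, hjd⟩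
        exact hnd ⟨j, by rwa [isDefenseOf_extend (by omega)] at hjd⟩
      · rintro ⟨r', hr1, hr2, hr3, hr4⟩
        have hr2' : r' < nextPos d := by omega
        exact hnr ⟨r', hr1, hr2', hr3.trans h1,
          by rwa [openAt_extend hr2' (by omega)] at hr4⟩
  · -- D12
    intro n1 n2 r hd1 hd2
    obtain ⟨mv1, hm1, hi1, hr1⟩ := hd1
    obtain ⟨mv2, hm2, hi2, hr2⟩ := hd2
    have hn1 : n1 < nextPos d + 1 := by have := moveAt_lt hm1; simpa using this
    have hn2 : n2 < nextPos d + 1 := by have := moveAt_lt hm2; simpa using this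
    rcases Nat.lt_or_ge n1 (nextPos d) with hl1 | hg1 <;>
      rcases Nat.lt_or_ge n2 (nextPos d) with hl2 | hg2
    · exact hD12 n1 n2 r ⟨mv1, hnew hm1 hl1, hi1, hr1⟩ ⟨mv2, hnew hm2 hl2, hi2, hr2⟩
    · -- n2 is new
      exfalso
      have : n2 = nextPos d := by omega
      subst this
      rw [hself] at hm2; cases Option.some_injective _ hm2
      obtain ⟨_, hnd, _⟩ := h4 hi2
      exact hnd ⟨n1, mv1, hnew hm1 hl1, hi1, hr1.trans hr2.symm⟩
    · exfalso
      have : n1 = nextPos d := by omega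
      subst this
      rw [hself] at hm1; cases Option.some_injective _ hm1
      obtain ⟨_, hnd, _⟩ := h4 hi1
      exact hnd ⟨n2, mv2, hnew hm2 hl2, hi2, hr2.trans hr1.symm⟩
    · omega
  · -- D13
    intro n1 n2 r hre ha1 ha2
    obtain ⟨mv1, hm1, hi1, hr1⟩ := ha1
    obtain ⟨mv2, hm2, hi2, hr2⟩ := ha2
    have hn1 : n1 < nextPos d + 1 := by have := moveAt_lt hm1; simpa using this
    have hn2 : n2 < nextPos d + 1 := by have := moveAt_lt hm2; simpa using this
    rcases Nat.lt_or_ge n1 (nextPos d) with hl1 | hg1 <;>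
      rcases Nat.lt_or_ge n2 (nextPos d) with hl2 | hg2
    · exact hD13 n1 n2 r hre ⟨mv1, hnew hm1 hl1, hi1, hr1⟩ ⟨mv2, hnew hm2 hl2, hi2, hr2⟩
    · exfalso
      have : n2 = nextPos d := by omega
      subst this
      rw [hself] at hm2; cases Option.some_injective _ hm2
      subst hr2; omega
    · exfalso
      have : n1 = nextPos d := by omega
      subst this
      rw [hself] at hm1; cases Option.some_injective _ hm1
      subst hr1; omega
    · omega
  · -- E rule
    intro n mv hodd hmv
    have hn : n < nextPos d + 1 := by have := moveAt_lt hmv; simpa using this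
    rcases Nat.lt_or_ge n (nextPos d) with hl | hg
    · exact hE n mv hodd (hnew hmv hl)
    · exfalso
      have : n = nextPos d := by omega
      subst this
      omega

/-- Characterization of legal O-replies. -/
theorem oreply {d : Dialogue} {m : Move} (hO : nextPos d % 2 = 1)
    (h : Legal rulesetEprime (d.extend m)) :
    m.ref = nextPos d - 1 ∧
    (m.isAttack = true → ∃ ψ, d.stmtAt m.ref = some (.form ψ) ∧ Attacks m.statement ψ) ∧
    (m.isAttack = false → ∃ a χ, d.moveAt m.ref = some a ∧ a.isAttack = true ∧
        d.stmtAt a.ref = some (.form χ) ∧ Defends χ a.statement m.statement) := by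
  obtain ⟨hpart, _, _, _, _, hE⟩ := legal_unfold h
  have hself : (d.extend m).moveAt (nextPos d) = some m := moveAt_extend_self
  have hOK : MoveOK (d.extend m) (nextPos d) m := by
    have : (d.extend m).moves[(nextPos d) - 1]? = some m := by
      unfold Dialogue.moveAt at hself
      rw [if_neg (by unfold nextPos; omega)] at hself
      exact hself
    have h2 := hpart ((nextPos d) - 1) m this
    rwa [Nat.sub_add_cancel (by unfold nextPos; omega)] at h2
  obtain ⟨hrlt, hrp, hatk, hdef⟩ := hOK
  have href : m.ref = nextPos d - 1 := hE (nextPos d) m hO hself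
  refine ⟨href, ?_, ?_⟩
  · intro ha
    obtain ⟨ψ, hψ, hA⟩ := hatk ha
    rw [stmtAt_extend_lt hrlt] at hψ
    exact ⟨ψ, hψ, hA⟩
  · intro ha
    obtain ⟨a, χ, hma, haa, hsa, hD⟩ := hdef ha
    have halt : a.ref < nextPos d := by
      have := (moveAt_moveOK hpart hma).1; omega
    rw [moveAt_extend_lt hrlt] at hma
    rw [stmtAt_extend_lt (by omega)] at hsa
    exact ⟨a, χ, hma, haa, hsa, hD⟩

/-- No move can defend against the attack occupying the final position. -/
theorem no_defense_last {d : Dialogue} (hpart : ParticleOK d) :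
    ¬ ∃ j, IsDefenseOf d j (nextPos d - 1) := by
  rintro ⟨j, mv, hmv, _, href⟩
  have h1 := (moveAt_moveOK hpart hmv).1
  have h2 := moveAt_lt hmv
  omega

/-- The initial dialogue for a non-atomic formula is legal. -/
theorem init_legal {φ : Formula} (hφ : ∀ p, φ ≠ .atom p) :
    Legal rulesetEprime ⟨φ, []⟩ := by
  have hmove : ∀ j, Dialogue.moveAt ⟨φ, []⟩ j = none := by
    intro j
    unfold Dialogue.moveAt
    split
    · rfl
    · simp
  have hstmt : ∀ j s, Dialogue.stmtAt ⟨φ, []⟩ j = some s → j = 0 ∧ s = .form φ := by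
    intro j s h
    unfold Dialogue.stmtAt at h
    split at h
    · exact ⟨by assumption, (Option.some_injective _ h).symm⟩
    · simp at h
  refine legal_mk ?_ ?_ ?_ ?_ ?_ ?_
  · intro i mv hmv; simp at hmv
  · intro n p hn h
    obtain ⟨rfl, hs⟩ := hstmt n _ h
    exact absurd (by injection hs with h'; exact h'.symm) (hφ p)
  · intro n r hdef
    obtain ⟨mv, hmv, _⟩ := hdef
    rw [hmove] at hmv; exact nomatch hmv
  · intro n1 n2 r h1 h2
    obtain ⟨mv, hmv, _⟩ := h1
    rw [hmove] at hmv; exact nomatch hmv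
  · intro n1 n2 r _ h1 h2
    obtain ⟨mv, hmv, _⟩ := h1
    rw [hmove] at hmv; exact nomatch hmv
  · intro n mv _ hmv
    rw [hmove] at hmv; exact nomatch hmv
/-! ### The bridge: winning strategies from calculus derivations -/

/-- All formulas of `Γ` have been asserted by O. -/
def Ctx (d : Dialogue) (Γ : List Formula) : Prop :=
  ∀ ψ ∈ Γ, ∃ j, j % 2 = 1 ∧ d.stmtAt j = some (.form ψ)

/-- There is a pending O-attack which P may answer by any `δ ∈ g`. -/
def Pending (d : Dialogue) (g : List Formula) : Prop :=
  ∃ r a, d.moveAt r = some a ∧ a.isAttack = true ∧ r % 2 = 1 ∧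
    (∀ δ ∈ g, ∃ χ, d.stmtAt a.ref = some (.form χ) ∧ Defends χ a.statement (.form δ)) ∧
    (¬ ∃ j, IsDefenseOf d j r) ∧
    (¬ ∃ r', r < r' ∧ r' < nextPos d ∧ r' % 2 = 1 ∧ OpenAt d r' (nextPos d))

def Inv (d : Dialogue) (Γ g : List Formula) : Prop :=
  Legal rulesetEprime d ∧ PTurn d ∧ Ctx d Γ ∧ (g ≠ [] → Pending d g)

theorem ctx_extend {d : Dialogue} {m : Move} {Γ} (h : Ctx d Γ) : Ctx (d.extend m) Γ := by
  intro ψ hψ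
  obtain ⟨j, hj1, hj2⟩ := h ψ hψ
  exact ⟨j, hj1, by rw [stmtAt_extend_lt (stmtAt_lt hj2)]; exact hj2⟩

theorem pwin {d : Dialogue} (m : Move) (hP : PTurn d)
    (hleg : LegalExt rulesetEprime d m)
    (h : PWinning rulesetEprime (d.extend m)) : PWinning rulesetEprime d :=
  PWinningC.pMove d m hP hleg trivial h

theorem pending_step {d : Dialogue} {m m' : Move} {g : List Formula}
    (hpend : Pending d g) (hP : PTurn d)
    (hm : m.isAttack = true) (hm' : m'.isAttack = false) (hm'ref : m'.ref = nextPos d) :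
    Pending ((d.extend m).extend m') g := by
  obtain ⟨r, a, hma, haa, hrodd, hdefs, hnd, hnr⟩ := hpend
  have hrlt : r < nextPos d := moveAt_lt hma
  have hP' : nextPos d % 2 = 0 := hP
  refine ⟨r, a, ?_, haa, hrodd, ?_, ?_, ?_⟩
  · rw [moveAt_extend_lt (by first | (simp; omega) | simp | omega), moveAt_extend_lt hrlt]
    exact hma
  · intro δ hδ
    obtain ⟨χ, h1, h2⟩ := hdefs δ hδ
    have := stmtAt_lt h1
    exact ⟨χ, by rw [stmtAt_extend_lt (by first | (simp; omega) | simp | omega), stmtAt_extend_lt (by omega)]; exact h1, h2⟩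
  · rintro ⟨j, mv, hjm, hji, hjr⟩
    have hjlt : j < nextPos d + 2 := by
      have := moveAt_lt hjm; simp only [nextPos_extend] at this; omega
    rcases Nat.lt_or_ge j (nextPos d) with hl | hg
    · refine hnd ⟨j, mv, ?_, hji, hjr⟩
      rw [moveAt_extend_lt (by first | (simp; omega) | simp | omega), moveAt_extend_lt hl] at hjm
      exact hjm
    · rcases Nat.lt_or_ge j (nextPos d + 1) with hl2 | hg2
      · -- j = nextPos d : that position holds `m`, an attack
        have hj : j = nextPos d := by omega
        subst hj
        rw [moveAt_extend_lt (by first | (simp; omega) | simp | omega), moveAt_extend_self] at hjm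
        cases Option.some_injective _ hjm
        rw [hm] at hji; exact Bool.noConfusion hji
      · -- j = nextPos d + 1 : that position holds `m'`, whose ref is `nextPos d ≠ r`
        have hj : j = nextPos d + 1 := by omega
        subst hj
        have : ((d.extend m).extend m').moveAt (nextPos (d.extend m)) = some m' :=
          moveAt_extend_self
        rw [nextPos_extend] at this
        rw [this] at hjm
        cases Option.some_injective _ hjm
        omega
  · rintro ⟨r', h1, h2, h3, h4⟩
    rw [nextPos_extend, nextPos_extend] at h2
    rcases Nat.lt_or_ge r' (nextPos d) with hl | hg
    · refine hnr ⟨r', h1, hl, h3, ?_⟩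
      have h4' := openAt_mono (k := nextPos d) h4 (by simp only [nextPos_extend]; omega)
      rw [openAt_extend (by first | (simp; omega) | simp | omega) (by first | (simp; omega) | simp | omega),
        openAt_extend hl (by omega)] at h4'
      exact h4'
    · rcases Nat.lt_or_ge r' (nextPos d + 1) with hl2 | hg2
      · have : r' = nextPos d := by omega
        omega
      · have hr' : r' = nextPos d + 1 := by omega
        subst hr'
        obtain ⟨⟨mv, hmv, hmvA⟩, _⟩ := h4
        have : ((d.extend m).extend m').moveAt (nextPos (d.extend m)) = some m' :=
          moveAt_extend_self
        rw [nextPos_extend] at this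
        rw [this] at hmv
        cases Option.some_injective _ hmv
        rw [hm'] at hmvA; exact Bool.noConfusion hmvA

theorem pending_fresh {d : Dialogue} {m' : Move} {g : List Formula}
    (hpart : ParticleOK (d.extend m'))
    (hOodd : nextPos d % 2 = 1)
    (hm'a : m'.isAttack = true) (hm'ref : m'.ref = nextPos d - 1)
    (hχ : ∃ χ, d.stmtAt m'.ref = some (.form χ) ∧
      ∀ δ ∈ g, Defends χ m'.statement (.form δ)) :
    Pending (d.extend m') g := by
  obtain ⟨χ, hχ1, hχ2⟩ := hχ
  have hreflt : m'.ref < nextPos d := stmtAt_lt hχ1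
  refine ⟨nextPos d, m', moveAt_extend_self, hm'a, hOodd, ?_, ?_, ?_⟩
  · intro δ hδ
    exact ⟨χ, by rw [stmtAt_extend_lt hreflt]; exact hχ1, hχ2 δ hδ⟩
  · have := no_defense_last hpart
    rw [nextPos_extend] at this
    simpa using this
  · rintro ⟨r', h1, h2, _, _⟩
    rw [nextPos_extend] at h2
    omega
theorem atomInv {ax : List Formula → ℕ → Prop} {Γ p} (h : W ax Γ (.inr (.atom p))) :
    ax Γ p := by
  cases h; assumption

/-- The induction motive for the bridge theorem. -/
def BridgeMot : List Formula → Judg → Prop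
  | Γ, .inl g => ∀ d, Inv d Γ g → PWinning rulesetEprime d
  | Γ, .inr δ => ∀ d, Legal rulesetEprime d → nextPos d % 2 = 1 → Ctx d Γ →
      d.stmtAt (nextPos d - 1) = some (.form δ) →
      (∀ m', LegalExt rulesetEprime d m' → m'.isAttack = false →
        PWinning rulesetEprime (d.extend m')) →
      PWinning rulesetEprime d

theorem bridge : ∀ {Γ J}, W axP Γ J → BridgeMot Γ J := by
  intro Γ J h
  induction h with
  | @defend Γ g δ hδ hWδ ih =>
      intro d hInv
      obtain ⟨hleg, hP, hctx, hpend⟩ := hInv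
      obtain ⟨r, a, hma, haa, hrodd, hdefs, hnd, hnr⟩ := hpend (List.ne_nil_of_mem hδ)
      obtain ⟨χ, hsa, hD⟩ := hdefs δ hδ
      have hrlt : r < nextPos d := moveAt_lt hma
      have hP' : nextPos d % 2 = 0 := hP
      have hlegext : Legal rulesetEprime (d.extend ⟨.form δ, false, r⟩) := by
        refine legal_extend_P hleg hP hrodd hrlt (fun h => Bool.noConfusion h) ?_ ?_
        · exact fun _ => ⟨⟨a, χ, hma, haa, hsa, hD⟩, hnd, hnr⟩
        · intro p hp
          injection hp with hp
          subst hp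
          rcases atomInv hWδ with hmem | hmem
          · obtain ⟨j, hj1, hj2⟩ := hctx _ hmem
            exact ⟨j, hj1, Or.inl hj2⟩
          · obtain ⟨j, hj1, hj2⟩ := hctx _ hmem
            exact ⟨j, hj1, Or.inr hj2⟩
      refine pwin _ hP hlegext ?_
      refine ih _ hlegext (by simp only [nextPos_extend]; omega) (ctx_extend hctx) ?_ ?_
      · have : nextPos (d.extend ⟨.form δ, false, r⟩) - 1 = nextPos d := by simp
        rw [this, stmtAt_extend_self]
      · intro m'' h2 hb2
        exfalso
        obtain ⟨href2, _, hdefc⟩ := oreply (by simp only [nextPos_extend]; omega) h2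
        obtain ⟨a', χ', hma', ha'A, _, _⟩ := hdefc hb2
        rw [href2] at hma'
        have : nextPos (d.extend ⟨.form δ, false, r⟩) - 1 = nextPos d := by simp
        rw [this] at hma'
        rw [moveAt_extend_self] at hma'
        cases Option.some_injective _ hma'
        exact Bool.noConfusion ha'A
  | @aAndL Γ g a b hmem hW1 ih =>
      intro d hInv
      obtain ⟨hleg, hP, hctx, hpend⟩ := hInv
      obtain ⟨j, hjodd, hjst⟩ := hctx _ hmem
      have hjlt := stmtAt_lt hjst
      have hP' : nextPos d % 2 = 0 := hP
      have hlegext : Legal rulesetEprime (d.extend ⟨.andL, true, j⟩) := by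
        refine legal_extend_P hleg hP hjodd hjlt
          (fun _ => ⟨a.and b, hjst, Attacks.andL a b⟩)
          (fun h => Bool.noConfusion h) (fun p hp => Statement.noConfusion hp)
      refine pwin _ hP hlegext ?_
      refine PWinningC.oMoves _ (fun h => by
        have : nextPos (d.extend ⟨.andL, true, j⟩) % 2 = 0 := h
        rw [nextPos_extend] at this; omega) ?_
      intro m' hm'leg
      obtain ⟨href, hatk, hdefc⟩ := oreply (by simp only [nextPos_extend]; omega) hm'leg
      have hrefeq : m'.ref = nextPos d := by simpa using href
      cases hbA : m'.isAttack with
      | true =>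
          exfalso
          obtain ⟨ψ, hψ, hA⟩ := hatk hbA
          rw [hrefeq, stmtAt_extend_self] at hψ
          exact Statement.noConfusion (Option.some_injective _ hψ)
      | false =>
          obtain ⟨a', χ, hma', haa', hsa', hD'⟩ := hdefc hbA
          rw [hrefeq, moveAt_extend_self] at hma'
          cases Option.some_injective _ hma'
          rw [show (⟨.andL, true, j⟩ : Move).ref = j from rfl,
            stmtAt_extend_lt hjlt, hjst] at hsa'
          have hχ : Formula.and a b = χ := by
            simpa using hsa'
          subst hχ
          generalize hs : m'.statement = s at hD'
          cases hD' with
          | andL =>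
              refine ih _ ⟨hm'leg, ?_, ?_, ?_⟩
              · show nextPos _ % 2 = 0
                simp only [nextPos_extend]; omega
              · intro ψ hψ
                rcases List.mem_cons.1 hψ with rfl | hψ
                · refine ⟨nextPos d + 1, by omega, ?_⟩
                  have : nextPos (d.extend ⟨.andL, true, j⟩) = nextPos d + 1 := by simp
                  rw [← this, stmtAt_extend_self, hs]
                · exact ctx_extend (ctx_extend hctx) ψ hψ
              · exact fun hg => pending_step (hpend hg) hP rfl hbA hrefeq
  | @aAndR Γ g a b hmem hW1 ih =>
      intro d hInv
      obtain ⟨hleg, hP, hctx, hpend⟩ := hInv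
      obtain ⟨j, hjodd, hjst⟩ := hctx _ hmem
      have hjlt := stmtAt_lt hjst
      have hP' : nextPos d % 2 = 0 := hP
      have hlegext : Legal rulesetEprime (d.extend ⟨.andR, true, j⟩) := by
        refine legal_extend_P hleg hP hjodd hjlt
          (fun _ => ⟨a.and b, hjst, Attacks.andR a b⟩)
          (fun h => Bool.noConfusion h) (fun p hp => Statement.noConfusion hp)
      refine pwin _ hP hlegext ?_
      refine PWinningC.oMoves _ (fun h => by
        have : nextPos (d.extend ⟨.andR, true, j⟩) % 2 = 0 := h
        rw [nextPos_extend] at this; omega) ?_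
      intro m' hm'leg
      obtain ⟨href, hatk, hdefc⟩ := oreply (by simp only [nextPos_extend]; omega) hm'leg
      have hrefeq : m'.ref = nextPos d := by simpa using href
      cases hbA : m'.isAttack with
      | true =>
          exfalso
          obtain ⟨ψ, hψ, hA⟩ := hatk hbA
          rw [hrefeq, stmtAt_extend_self] at hψ
          exact Statement.noConfusion (Option.some_injective _ hψ)
      | false =>
          obtain ⟨a', χ, hma', haa', hsa', hD'⟩ := hdefc hbA
          rw [hrefeq, moveAt_extend_self] at hma'
          cases Option.some_injective _ hma'
          rw [show (⟨.andR, true, j⟩ : Move).ref = j from rfl,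
            stmtAt_extend_lt hjlt, hjst] at hsa'
          have hχ : Formula.and a b = χ := by
            simpa using hsa'
          subst hχ
          generalize hs : m'.statement = s at hD'
          cases hD' with
          | andR =>
              refine ih _ ⟨hm'leg, ?_, ?_, ?_⟩
              · show nextPos _ % 2 = 0
                simp only [nextPos_extend]; omega
              · intro ψ hψ
                rcases List.mem_cons.1 hψ with rfl | hψ
                · refine ⟨nextPos d + 1, by omega, ?_⟩
                  have : nextPos (d.extend ⟨.andR, true, j⟩) = nextPos d + 1 := by simp
                  rw [← this, stmtAt_extend_self, hs]
                · exact ctx_extend (ctx_extend hctx) ψ hψ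
              · exact fun hg => pending_step (hpend hg) hP rfl hbA hrefeq
  | @aOr Γ g a b hmem hW1 hW2 ih1 ih2 =>
      intro d hInv
      obtain ⟨hleg, hP, hctx, hpend⟩ := hInv
      obtain ⟨j, hjodd, hjst⟩ := hctx _ hmem
      have hjlt := stmtAt_lt hjst
      have hP' : nextPos d % 2 = 0 := hP
      have hlegext : Legal rulesetEprime (d.extend ⟨.qmark, true, j⟩) := by
        refine legal_extend_P hleg hP hjodd hjlt
          (fun _ => ⟨a.or b, hjst, Attacks.qmark a b⟩)
          (fun h => Bool.noConfusion h) (fun p hp => Statement.noConfusion hp)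
      refine pwin _ hP hlegext ?_
      refine PWinningC.oMoves _ (fun h => by
        have : nextPos (d.extend ⟨.qmark, true, j⟩) % 2 = 0 := h
        rw [nextPos_extend] at this; omega) ?_
      intro m' hm'leg
      obtain ⟨href, hatk, hdefc⟩ := oreply (by simp only [nextPos_extend]; omega) hm'leg
      have hrefeq : m'.ref = nextPos d := by simpa using href
      cases hbA : m'.isAttack with
      | true =>
          exfalso
          obtain ⟨ψ, hψ, hA⟩ := hatk hbA
          rw [hrefeq, stmtAt_extend_self] at hψ
          exact Statement.noConfusion (Option.some_injective _ hψ)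
      | false =>
          obtain ⟨a', χ, hma', haa', hsa', hD'⟩ := hdefc hbA
          rw [hrefeq, moveAt_extend_self] at hma'
          cases Option.some_injective _ hma'
          rw [show (⟨.qmark, true, j⟩ : Move).ref = j from rfl,
            stmtAt_extend_lt hjlt, hjst] at hsa'
          have hχ : Formula.or a b = χ := by
            simpa using hsa'
          subst hχ
          generalize hs : m'.statement = s at hD'
          cases hD' with
          | orL =>
              refine ih1 _ ⟨hm'leg, ?_, ?_, ?_⟩
              · show nextPos _ % 2 = 0
                simp only [nextPos_extend]; omega
              · intro ψ hψ
                rcases List.mem_cons.1 hψ with rfl | hψ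
                · refine ⟨nextPos d + 1, by omega, ?_⟩
                  have : nextPos (d.extend ⟨.qmark, true, j⟩) = nextPos d + 1 := by simp
                  rw [← this, stmtAt_extend_self, hs]
                · exact ctx_extend (ctx_extend hctx) ψ hψ
              · exact fun hg => pending_step (hpend hg) hP rfl hbA hrefeq
          | orR =>
              refine ih2 _ ⟨hm'leg, ?_, ?_, ?_⟩
              · show nextPos _ % 2 = 0
                simp only [nextPos_extend]; omega
              · intro ψ hψ
                rcases List.mem_cons.1 hψ with rfl | hψ
                · refine ⟨nextPos d + 1, by omega, ?_⟩
                  have : nextPos (d.extend ⟨.qmark, true, j⟩) = nextPos d + 1 := by simp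
                  rw [← this, stmtAt_extend_self, hs]
                · exact ctx_extend (ctx_extend hctx) ψ hψ
              · exact fun hg => pending_step (hpend hg) hP rfl hbA hrefeq
  | @aImp Γ g a b hmem hWa hW1 iha ih1 =>
      intro d hInv
      obtain ⟨hleg, hP, hctx, hpend⟩ := hInv
      obtain ⟨j, hjodd, hjst⟩ := hctx _ hmem
      have hjlt := stmtAt_lt hjst
      have hP' : nextPos d % 2 = 0 := hP
      have hlegext : Legal rulesetEprime (d.extend ⟨.form a, true, j⟩) := by
        refine legal_extend_P hleg hP hjodd hjlt
          (fun _ => ⟨a.imp b, hjst, Attacks.imp a b⟩)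
          (fun h => Bool.noConfusion h) ?_
        intro p hp
        injection hp with hp
        subst hp
        rcases atomInv hWa with hmem' | hmem'
        · obtain ⟨j', hj1, hj2⟩ := hctx _ hmem'
          exact ⟨j', hj1, Or.inl hj2⟩
        · obtain ⟨j', hj1, hj2⟩ := hctx _ hmem'
          exact ⟨j', hj1, Or.inr hj2⟩
      refine pwin _ hP hlegext ?_
      refine iha _ hlegext (by simp only [nextPos_extend]; omega) (ctx_extend hctx) ?_ ?_
      · have : nextPos (d.extend ⟨.form a, true, j⟩) - 1 = nextPos d := by simp
        rw [this, stmtAt_extend_self]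
      · intro m' h2 hb2
        obtain ⟨href2, _, hdefc⟩ := oreply (by simp only [nextPos_extend]; omega) h2
        obtain ⟨a', χ, hma', haa', hsa', hD'⟩ := hdefc hb2
        have hrefeq : m'.ref = nextPos d := by simpa using href2
        rw [hrefeq, moveAt_extend_self] at hma'
        cases Option.some_injective _ hma'
        rw [show (⟨.form a, true, j⟩ : Move).ref = j from rfl,
          stmtAt_extend_lt hjlt, hjst] at hsa'
        have hχ : Formula.imp a b = χ := by
          simpa using hsa'
        subst hχ
        generalize hs : m'.statement = s at hD'
        cases hD' with
        | imp =>
            refine ih1 _ ⟨h2, ?_, ?_, ?_⟩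
            · show nextPos _ % 2 = 0
              simp only [nextPos_extend]; omega
            · intro ψ hψ
              rcases List.mem_cons.1 hψ with rfl | hψ
              · refine ⟨nextPos d + 1, by omega, ?_⟩
                have : nextPos (d.extend ⟨.form a, true, j⟩) = nextPos d + 1 := by simp
                rw [← this, stmtAt_extend_self, hs]
              · exact ctx_extend (ctx_extend hctx) ψ hψ
            · exact fun hg => pending_step (hpend hg) hP rfl hb2 hrefeq
  | @aNeg Γ g a hmem hWa iha =>
      intro d hInv
      obtain ⟨hleg, hP, hctx, hpend⟩ := hInv
      obtain ⟨j, hjodd, hjst⟩ := hctx _ hmem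
      have hjlt := stmtAt_lt hjst
      have hP' : nextPos d % 2 = 0 := hP
      have hlegext : Legal rulesetEprime (d.extend ⟨.form a, true, j⟩) := by
        refine legal_extend_P hleg hP hjodd hjlt
          (fun _ => ⟨a.neg, hjst, Attacks.neg a⟩)
          (fun h => Bool.noConfusion h) ?_
        intro p hp
        injection hp with hp
        subst hp
        rcases atomInv hWa with hmem' | hmem'
        · obtain ⟨j', hj1, hj2⟩ := hctx _ hmem'
          exact ⟨j', hj1, Or.inl hj2⟩
        · obtain ⟨j', hj1, hj2⟩ := hctx _ hmem'
          exact ⟨j', hj1, Or.inr hj2⟩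
      refine pwin _ hP hlegext ?_
      refine iha _ hlegext (by simp only [nextPos_extend]; omega) (ctx_extend hctx) ?_ ?_
      · have : nextPos (d.extend ⟨.form a, true, j⟩) - 1 = nextPos d := by simp
        rw [this, stmtAt_extend_self]
      · intro m' h2 hb2
        exfalso
        obtain ⟨href2, _, hdefc⟩ := oreply (by simp only [nextPos_extend]; omega) h2
        obtain ⟨a', χ, hma', haa', hsa', hD'⟩ := hdefc hb2
        have hrefeq : m'.ref = nextPos d := by simpa using href2
        rw [hrefeq, moveAt_extend_self] at hma'
        cases Option.some_injective _ hma'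
        rw [show (⟨.form a, true, j⟩ : Move).ref = j from rfl,
          stmtAt_extend_lt hjlt, hjst] at hsa'
        have hχ : Formula.neg a = χ := by
          simpa using hsa'
        subst hχ
        generalize hs : m'.statement = s at hD'
        cases hD'
  | @rAtom Γ p hax =>
      intro d hleg hOodd hctx hst hdef
      refine PWinningC.oMoves _ (fun h => by
        have : nextPos d % 2 = 0 := h; omega) ?_
      intro m' hm'leg
      obtain ⟨href, hatk, _⟩ := oreply hOodd hm'leg
      cases hbA : m'.isAttack with
      | false => exact hdef m' hm'leg hbA
      | true =>
          exfalso
          obtain ⟨ψ, hψ, hA⟩ := hatk hbA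
          rw [href, hst] at hψ
          have hψ' : Formula.atom p = ψ := by simpa using hψ
          subst hψ'
          generalize hs : m'.statement = s at hA
          cases hA
  | @rAnd Γ a b h1 h2 ih1 ih2 =>
      intro d hleg hOodd hctx hst hdef
      refine PWinningC.oMoves _ (fun h => by
        have : nextPos d % 2 = 0 := h; omega) ?_
      intro m' hm'leg
      obtain ⟨href, hatk, _⟩ := oreply hOodd hm'leg
      cases hbA : m'.isAttack with
      | false => exact hdef m' hm'leg hbA
      | true =>
          obtain ⟨ψ, hψ, hA⟩ := hatk hbA
          rw [href, hst] at hψ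
          have hψ' : Formula.and a b = ψ := by simpa using hψ
          subst hψ'
          have hP'' : PTurn (d.extend m') := by
            show nextPos _ % 2 = 0
            simp only [nextPos_extend]; omega
          generalize hs : m'.statement = s at hA
          cases hA with
          | andL a b =>
              refine ih1 _ ⟨hm'leg, hP'', ctx_extend hctx, fun _ => ?_⟩
              refine pending_fresh (legal_unfold hm'leg).1 hOodd hbA href ?_
              refine ⟨a.and b, by rw [href]; exact hst, ?_⟩
              intro δ hδ
              rcases List.mem_singleton.1 hδ with rfl
              rw [hs]
              exact Defends.andL _ _
          | andR a b =>
              refine ih2 _ ⟨hm'leg, hP'', ctx_extend hctx, fun _ => ?_⟩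
              refine pending_fresh (legal_unfold hm'leg).1 hOodd hbA href ?_
              refine ⟨a.and b, by rw [href]; exact hst, ?_⟩
              intro δ hδ
              rcases List.mem_singleton.1 hδ with rfl
              rw [hs]
              exact Defends.andR _ _
  | @rOr Γ a b h1 ih1 =>
      intro d hleg hOodd hctx hst hdef
      refine PWinningC.oMoves _ (fun h => by
        have : nextPos d % 2 = 0 := h; omega) ?_
      intro m' hm'leg
      obtain ⟨href, hatk, _⟩ := oreply hOodd hm'leg
      cases hbA : m'.isAttack with
      | false => exact hdef m' hm'leg hbA
      | true =>
          obtain ⟨ψ, hψ, hA⟩ := hatk hbA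
          rw [href, hst] at hψ
          have hψ' : Formula.or a b = ψ := by simpa using hψ
          subst hψ'
          have hP'' : PTurn (d.extend m') := by
            show nextPos _ % 2 = 0
            simp only [nextPos_extend]; omega
          generalize hs : m'.statement = s at hA
          cases hA with
          | qmark a b =>
              refine ih1 _ ⟨hm'leg, hP'', ctx_extend hctx, fun _ => ?_⟩
              refine pending_fresh (legal_unfold hm'leg).1 hOodd hbA href ?_
              refine ⟨a.or b, by rw [href]; exact hst, ?_⟩
              intro δ hδ
              rcases List.mem_cons.1 hδ with rfl | hδ
              · rw [hs]
                exact Defends.orL _ _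
              · rcases List.mem_singleton.1 hδ with rfl
                rw [hs]
                exact Defends.orR _ _
  | @rImp Γ a b h1 ih1 =>
      intro d hleg hOodd hctx hst hdef
      refine PWinningC.oMoves _ (fun h => by
        have : nextPos d % 2 = 0 := h; omega) ?_
      intro m' hm'leg
      obtain ⟨href, hatk, _⟩ := oreply hOodd hm'leg
      cases hbA : m'.isAttack with
      | false => exact hdef m' hm'leg hbA
      | true =>
          obtain ⟨ψ, hψ, hA⟩ := hatk hbA
          rw [href, hst] at hψ
          have hψ' : Formula.imp a b = ψ := by simpa using hψ
          subst hψ'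
          have hP'' : PTurn (d.extend m') := by
            show nextPos _ % 2 = 0
            simp only [nextPos_extend]; omega
          generalize hs : m'.statement = s at hA
          cases hA with
          | imp a b =>
              refine ih1 _ ⟨hm'leg, hP'', ?_, fun _ => ?_⟩
              · intro ψ hψ2
                rcases List.mem_cons.1 hψ2 with rfl | hψ2
                · refine ⟨nextPos d, hOodd, ?_⟩
                  have hlast : m'.ref + 1 = nextPos d := by
                    have := stmtAt_lt hst
                    omega
                  rw [show nextPos d = nextPos d by rfl]
                  have : (d.extend m').stmtAt (nextPos d) = some m'.statement :=
                    stmtAt_extend_self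
                  rw [this, hs]
                · exact ctx_extend hctx ψ hψ2
              · refine pending_fresh (legal_unfold hm'leg).1 hOodd hbA href ?_
                refine ⟨a.imp b, by rw [href]; exact hst, ?_⟩
                intro δ hδ
                rcases List.mem_singleton.1 hδ with rfl
                rw [hs]
                exact Defends.imp _ _
  | @rNeg Γ a h1 ih1 =>
      intro d hleg hOodd hctx hst hdef
      refine PWinningC.oMoves _ (fun h => by
        have : nextPos d % 2 = 0 := h; omega) ?_
      intro m' hm'leg
      obtain ⟨href, hatk, _⟩ := oreply hOodd hm'leg
      cases hbA : m'.isAttack with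
      | false => exact hdef m' hm'leg hbA
      | true =>
          obtain ⟨ψ, hψ, hA⟩ := hatk hbA
          rw [href, hst] at hψ
          have hψ' : Formula.neg a = ψ := by simpa using hψ
          subst hψ'
          have hP'' : PTurn (d.extend m') := by
            show nextPos _ % 2 = 0
            simp only [nextPos_extend]; omega
          generalize hs : m'.statement = s at hA
          cases hA with
          | neg a =>
              refine ih1 _ ⟨hm'leg, hP'', ?_, fun hg => absurd rfl hg⟩
              intro ψ hψ2
              rcases List.mem_cons.1 hψ2 with rfl | hψ2
              · refine ⟨nextPos d, hOodd, ?_⟩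
                have : (d.extend m').stmtAt (nextPos d) = some m'.statement :=
                  stmtAt_extend_self
                rw [this, hs]
              · exact ctx_extend hctx ψ hψ2
/-! ### Assembly -/

theorem valid_of_W {φ : Formula} (hφ : ∀ p, φ ≠ .atom p) (h : W axP [] (.inr φ)) :
    valid rulesetEprime φ := by
  have hleg := init_legal hφ
  refine ⟨hleg, ?_⟩
  have hb := bridge h
  refine hb ⟨φ, []⟩ hleg (by simp [nextPos]) (fun ψ hψ => absurd hψ List.not_mem_nil) rfl ?_
  intro m' hm' hb'
  exfalso
  obtain ⟨href, _, hdefc⟩ := oreply (by simp [nextPos]) hm'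
  obtain ⟨a, χ, hma, _, _, _⟩ := hdefc hb'
  have : m'.ref = 0 := by simpa [nextPos] using href
  rw [this] at hma
  exact nomatch hma

theorem IProv_valid (φ : Formula) (h : IProv φ) : valid rulesetEprime φ := by
  refine valid_of_W ?_ (W.mono (fun Γ p hp => Or.inl hp) (IProv_W h))
  intro p hp
  subst hp
  have := h.heval_eq (fun _ => 0)
  have h0 : heval (fun _ => 0) (.atom p) = 0 := rfl
  rw [h0] at this
  exact absurd this (by decide)

theorem stab_valid (p : ℕ) : valid rulesetEprime (stab p) := by
  refine valid_of_W (fun q h => by simp [stab] at h) ?_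
  exact .rImp (dfd' (δ := .atom p) (.rAtom (Or.inr (List.mem_cons_self))) (by simp))


/-- The set of E′-valid formulas properly extends intuitionistic logic:
every intuitionistically valid formula is E′-valid, every stability
instance ¬¬p → p is E′-valid, and ¬¬p → p is not intuitionistically
valid. -/
theorem Eprime_properly_extends_IL :
    (∀ φ : Formula, IProv φ → valid rulesetEprime φ) ∧
    (∀ p : ℕ, valid rulesetEprime (stab p)) ∧
    (∀ p : ℕ, ¬ IProv (stab p)) := by
  exact ⟨IProv_valid, stab_valid, not_IProv_stab⟩

end LorenzenDialogues
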